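/- Let Σ be an alphabet of cardinality k ≥ 2, let N ≥ 1 be an integer, and let L be a nonempty subset of Σ^N (all words of L have length N). Set m = |L|, r = ⌊log_k m⌋, and v = 1 + k + k^2 + ⋯ + k^r. If N ≥ 3r + 1, then sc(L) ≤ 2v + m·(N − 2r − 1) + 1. -/

import Mathlib

/-- The state complexity of a language `L`: the number of distinct left
quotients `p⁻¹L = { s | p ++ s ∈ L }` as `p` ranges over all words (this is
the number of states of the minimal complete DFA accepting `L`, counting the
empty quotient if it occurs). -/
noncomputable def sc {α : Type*} (L : Set (List α)) : ℕ :=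
  Set.ncard { Q : Set (List α) | ∃ p : List α, Q = { s | p ++ s ∈ L } }

set_option linter.unusedSectionVars false
namespace SCAux

variable {α : Type*} [DecidableEq α]

def qs (L : Finset (List α)) (p : List α) : Finset (List α) :=
  (L.filter (fun w => p <+: w)).image (fun w => w.drop p.length)

def pre (L : Finset (List α)) (i : ℕ) : Finset (List α) :=
  L.image (fun w => w.take i)

def FF (L : Finset (List α)) (i : ℕ) : Finset (Finset (List α)) :=
  (pre L i).image (qs L)

def bb (L : Finset (List α)) (i : ℕ) : ℕ := ∑ Q ∈ FF L i, (Q.card - 1)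

def der (a : α) (S : Finset (List α)) : Finset (List α) :=
  (S.filter (fun s => s.head? = some a)).image List.tail

theorem mem_qs {L : Finset (List α)} {p s : List α} : s ∈ qs L p ↔ p ++ s ∈ L := by
  simp only [qs, Finset.mem_image, Finset.mem_filter]
  constructor
  · rintro ⟨w, ⟨hw, hpw⟩, rfl⟩
    obtain ⟨t, rfl⟩ := hpw
    rwa [List.drop_left]
  · intro h
    exact ⟨p ++ s, ⟨h, List.prefix_append _ _⟩, List.drop_left⟩

theorem pre_len {L : Finset (List α)} {N i : ℕ} (hlen : ∀ w ∈ L, w.length = N)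
    (hiN : i ≤ N) {p : List α} (hp : p ∈ pre L i) : p.length = i := by
  obtain ⟨w, hw, rfl⟩ := Finset.mem_image.mp hp
  have := hlen w hw
  simp [List.length_take]
  omega

theorem qs_nonempty {L : Finset (List α)} {i : ℕ} {p : List α} (hp : p ∈ pre L i) :
    (qs L p).Nonempty := by
  obtain ⟨w, hw, rfl⟩ := Finset.mem_image.mp hp
  refine ⟨w.drop i, mem_qs.mpr ?_⟩
  rwa [List.take_append_drop]


theorem card_of_len [Fintype α] (d : α) {S : Finset (List α)} {n : ℕ}
    (hn : ∀ l ∈ S, l.length = n) : S.card ≤ Fintype.card α ^ n := by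
  classical
  have h := Finset.card_le_card_of_injOn (s := S) (t := (Finset.univ : Finset (Fin n → α)))
    (fun l (j : Fin n) => l.getD j d) (fun a _ => Finset.mem_univ _) ?_
  · rw [Finset.card_univ] at h
    simpa using h
  · intro l₁ h₁ l₂ h₂ hf
    apply List.ext_getElem (by rw [hn l₁ h₁, hn l₂ h₂])
    intro i hi₁ hi₂
    have := congrFun hf ⟨i, by rwa [← hn l₁ h₁]⟩
    simpa [List.getD_eq_getElem, hi₁, hi₂] using this

theorem pre_card_le {L : Finset (List α)} {i : ℕ} : (pre L i).card ≤ L.card :=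
  Finset.card_image_le

theorem pre_card_le_pow [Fintype α] (d : α) {L : Finset (List α)} {N i : ℕ}
    (hlen : ∀ w ∈ L, w.length = N) (hiN : i ≤ N) :
    (pre L i).card ≤ Fintype.card α ^ i :=
  card_of_len d (fun _ hl => pre_len hlen hiN hl)

theorem pre_mono {L : Finset (List α)} {i j : ℕ} (h : i ≤ j) :
    (pre L i).card ≤ (pre L j).card := by
  have he : pre L i = (pre L j).image (fun p => p.take i) := by
    rw [pre, pre, Finset.image_image]
    apply Finset.image_congr
    intro w _
    simp [Function.comp, List.take_take, Nat.min_eq_left h]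
  rw [he]
  exact Finset.card_image_le

theorem sum_qs_card {L : Finset (List α)} {N i : ℕ} (hlen : ∀ w ∈ L, w.length = N)
    (hiN : i ≤ N) : ∑ p ∈ pre L i, (qs L p).card = L.card := by
  rw [Finset.card_eq_sum_card_fiberwise (f := fun w => w.take i) (t := pre L i)
    (fun w hw => by simpa [pre] using Finset.mem_image_of_mem (fun w => w.take i) hw)]
  apply Finset.sum_congr rfl
  intro p hp
  have hplen : p.length = i := pre_len hlen hiN hp
  have hfil : L.filter (fun w => p <+: w) = L.filter (fun w => w.take i = p) := by
    apply Finset.filter_congr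
    intro w _
    rw [List.prefix_iff_eq_take, hplen]
    exact ⟨fun h => h.symm, fun h => h.symm⟩
  rw [qs, hfil, hplen]
  apply Finset.card_image_of_injOn
  intro w₁ hw₁ w₂ hw₂ hd
  rw [Finset.coe_filter, Set.mem_setOf_eq] at hw₁ hw₂
  have e₁ : w₁ = p ++ w₁.drop i := by rw [← hw₁.2, List.take_append_drop]
  have e₂ : w₂ = p ++ w₂.drop i := by rw [← hw₂.2, List.take_append_drop]
  rw [e₁, e₂]
  exact congrArg (fun t => p ++ t) hd

theorem sum_image_le' {β γ : Type*} [DecidableEq γ] (s : Finset β) (f : β → γ) (g : γ → ℕ) :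
    ∑ y ∈ s.image f, g y ≤ ∑ x ∈ s, g (f x) := by
  classical
  induction s using Finset.induction_on with
  | empty => simp
  | insert a s ha ih =>
    rw [Finset.image_insert, Finset.sum_insert ha]
    by_cases hfa : f a ∈ s.image f
    · rw [Finset.insert_eq_self.mpr hfa]
      exact le_trans ih (Nat.le_add_left _ _)
    · rw [Finset.sum_insert hfa]
      exact Nat.add_le_add_left ih _

theorem bb_add_pre {L : Finset (List α)} {N i : ℕ} (hlen : ∀ w ∈ L, w.length = N)
    (hiN : i ≤ N) : bb L i + (pre L i).card ≤ L.card := by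
  have h1 : bb L i ≤ ∑ p ∈ pre L i, ((qs L p).card - 1) := sum_image_le' _ _ _
  have h2 : ∑ p ∈ pre L i, ((qs L p).card - 1) + (pre L i).card
      = ∑ p ∈ pre L i, (qs L p).card := by
    rw [Finset.card_eq_sum_ones, ← Finset.sum_add_distrib]
    apply Finset.sum_congr rfl
    intro p hp
    have := Finset.card_pos.mpr (qs_nonempty hp)
    omega
  have h3 := sum_qs_card hlen hiN
  omega


theorem qs_append_singleton {L : Finset (List α)} (p : List α) (a : α) :
    qs L (p ++ [a]) = der a (qs L p) := by
  ext s
  simp only [der, Finset.mem_image, Finset.mem_filter]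
  constructor
  · intro hs
    rw [mem_qs] at hs
    refine ⟨a :: s, ⟨?_, rfl⟩, rfl⟩
    rw [mem_qs]
    rw [List.append_assoc] at hs
    exact hs
  · rintro ⟨t, ⟨ht, hh⟩, rfl⟩
    rw [mem_qs] at ht ⊢
    cases t with
    | nil => simp at hh
    | cons b u =>
      simp only [List.head?_cons, Option.some.injEq] at hh
      subst hh
      rw [List.append_assoc]
      exact ht

theorem sum_sub_one_le {β : Type*} [DecidableEq β] {s : Finset β} (f : β → ℕ) {a₀ : β}
    (ha : a₀ ∈ s) (h1 : 1 ≤ f a₀) :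
    ∑ x ∈ s, (f x - 1) ≤ (∑ x ∈ s, f x) - 1 := by
  rw [← Finset.add_sum_erase _ f ha, ← Finset.add_sum_erase _ (fun x => f x - 1) ha]
  have h2 : ∑ x ∈ s.erase a₀, (f x - 1) ≤ ∑ x ∈ s.erase a₀, f x :=
    Finset.sum_le_sum (fun i _ => Nat.sub_le _ _)
  omega

theorem perG [Fintype α] {G : Finset (List α)} (hne : G.Nonempty) (h0 : ∀ s ∈ G, s ≠ []) :
    ∑ a : α, ((der a G).card - 1) ≤ G.card - 1 := by
  have hc : ∀ a : α, (der a G).card = (G.filter (fun s => s.head? = some a)).card := by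
    intro a
    rw [der]
    apply Finset.card_image_of_injOn
    intro s hs t ht hst
    rw [Finset.coe_filter, Set.mem_setOf_eq] at hs ht
    cases s with
    | nil => simp at hs
    | cons b u =>
      cases t with
      | nil => simp at ht
      | cons c w =>
        simp only [List.head?_cons, Option.some.injEq] at hs ht
        simp only [List.tail_cons] at hst
        rw [hs.2, ht.2, hst]
  have hsum : ∑ a : α, (G.filter (fun s => s.head? = some a)).card ≤ G.card := by
    rw [← Finset.card_biUnion]
    · exact Finset.card_le_card (Finset.biUnion_subset.mpr (fun a _ => Finset.filter_subset _ _))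
    · intro a _ c _ hac
      apply Finset.disjoint_left.mpr
      intro x hx hx'
      rw [Finset.mem_filter] at hx hx'
      apply hac
      have := hx.2.symm.trans hx'.2
      exact Option.some_inj.mp this
  obtain ⟨s₀, hs₀⟩ := hne
  obtain ⟨b, u, rfl⟩ : ∃ b u, s₀ = b :: u := by
    cases s₀ with
    | nil => exact absurd rfl (h0 _ hs₀)
    | cons b u => exact ⟨b, u, rfl⟩
  have h1 : 1 ≤ (G.filter (fun s => s.head? = some b)).card :=
    Finset.card_pos.mpr ⟨b :: u, Finset.mem_filter.mpr ⟨hs₀, rfl⟩⟩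
  calc ∑ a : α, ((der a G).card - 1)
      = ∑ a : α, ((G.filter (fun s => s.head? = some a)).card - 1) := by
        apply Finset.sum_congr rfl
        intro a _
        rw [hc]
    _ ≤ (∑ a : α, (G.filter (fun s => s.head? = some a)).card) - 1 :=
        sum_sub_one_le _ (Finset.mem_univ b) h1
    _ ≤ G.card - 1 := Nat.sub_le_sub_right hsum 1

theorem FF_nonempty {L : Finset (List α)} {i : ℕ} {Q : Finset (List α)} (hQ : Q ∈ FF L i) :
    Q.Nonempty := by
  obtain ⟨p, hp, rfl⟩ := Finset.mem_image.mp hQ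
  exact qs_nonempty hp

theorem FF_elem_len {L : Finset (List α)} {N i : ℕ} (hlen : ∀ w ∈ L, w.length = N)
    (hiN : i ≤ N) {Q : Finset (List α)} (hQ : Q ∈ FF L i) {s : List α} (hs : s ∈ Q) :
    s.length = N - i := by
  obtain ⟨p, hp, rfl⟩ := Finset.mem_image.mp hQ
  have h1 := hlen _ (mem_qs.mp hs)
  have h3 := pre_len hlen hiN hp
  rw [List.length_append] at h1
  omega

theorem bb_succ [Fintype α] {L : Finset (List α)} {N i : ℕ} (hlen : ∀ w ∈ L, w.length = N)
    (h : i + 1 ≤ N) : bb L (i + 1) ≤ bb L i := by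
  have hsub : FF L (i+1) ⊆ (FF L i ×ˢ (Finset.univ : Finset α)).image
      (fun x => der x.2 x.1) := by
    intro Q hQ
    obtain ⟨p, hp, rfl⟩ := Finset.mem_image.mp hQ
    obtain ⟨w, hw, rfl⟩ := Finset.mem_image.mp hp
    have hwlen := hlen w hw
    have hi : i < w.length := by omega
    have htake : w.take (i+1) = w.take i ++ [w[i]] := by
      rw [← List.take_concat_get hi, List.concat_eq_append]
    rw [htake, qs_append_singleton]
    apply Finset.mem_image.mpr
    refine ⟨⟨qs L (w.take i), w[i]⟩, Finset.mem_product.mpr ⟨?_, Finset.mem_univ _⟩, rfl⟩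
    exact Finset.mem_image_of_mem _ (Finset.mem_image_of_mem _ hw)
  calc bb L (i+1)
      ≤ ∑ Q ∈ (FF L i ×ˢ (Finset.univ : Finset α)).image (fun x => der x.2 x.1),
          (Q.card - 1) := Finset.sum_le_sum_of_subset hsub
    _ ≤ ∑ x ∈ FF L i ×ˢ (Finset.univ : Finset α), ((der x.2 x.1).card - 1) :=
        sum_image_le' _ _ _
    _ = ∑ G ∈ FF L i, ∑ a : α, ((der a G).card - 1) := Finset.sum_product _ _ _
    _ ≤ ∑ G ∈ FF L i, (G.card - 1) := by
        apply Finset.sum_le_sum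
        intro G hG
        apply perG (FF_nonempty hG)
        intro s hs
        have := FF_elem_len hlen (by omega) hG hs
        intro hnil
        rw [hnil] at this
        simp at this
        omega
    _ = bb L i := rfl

theorem bb_mono [Fintype α] {L : Finset (List α)} {N : ℕ} (hlen : ∀ w ∈ L, w.length = N) :
    ∀ {i j : ℕ}, i ≤ j → j ≤ N → bb L j ≤ bb L i := by
  intro i j
  induction j with
  | zero =>
    intro hij _
    have hi0 : i = 0 := Nat.le_zero.mp hij
    subst hi0
    exact le_rfl
  | succ n ih =>
    intro hij hjN
    rcases Nat.eq_or_lt_of_le hij with rfl | hlt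
    · exact le_rfl
    · exact le_trans (bb_succ hlen hjN) (ih (by omega) (by omega))


theorem FF_card_le_pre {L : Finset (List α)} {i : ℕ} : (FF L i).card ≤ (pre L i).card :=
  Finset.card_image_le

theorem width_suffix [Fintype α] (d : α) {L : Finset (List α)} {N i : ℕ}
    (hlen : ∀ w ∈ L, w.length = N) (hiN : i ≤ N) :
    (FF L i).card ≤ Fintype.card α ^ (N - i) + bb L i := by
  classical
  rw [← Finset.card_filter_add_card_filter_not (s := FF L i)
    (p := fun Q => Q.card = 1)]
  apply Nat.add_le_add
  · -- singletons
    set T := (FF L i).filter (fun Q => Q.card = 1) with hT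
    have hsing : ∀ Q ∈ T, ∃ s : List α, Q = {s} := by
      intro Q hQ
      exact Finset.card_eq_one.mp (Finset.mem_filter.mp hQ).2
    have hinj : Set.InjOn (fun Q : Finset (List α) => Q.toList.headI) T := by
      intro Q₁ h₁ Q₂ h₂ he
      obtain ⟨s₁, rfl⟩ := hsing Q₁ h₁
      obtain ⟨s₂, rfl⟩ := hsing Q₂ h₂
      simp only [Finset.toList_singleton, List.headI] at he
      rw [he]
    have hcard : T.card = (T.image (fun Q : Finset (List α) => Q.toList.headI)).card :=
      (Finset.card_image_of_injOn hinj).symm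
    rw [hcard]
    apply card_of_len d
    intro l hl
    obtain ⟨Q, hQ, rfl⟩ := Finset.mem_image.mp hl
    obtain ⟨s, rfl⟩ := hsing Q hQ
    simp only [Finset.toList_singleton, List.headI]
    exact FF_elem_len hlen hiN (Finset.mem_filter.mp hQ).1 (Finset.mem_singleton_self s)
  · -- non-singletons
    calc ((FF L i).filter (fun Q => ¬Q.card = 1)).card
        = ∑ _Q ∈ (FF L i).filter (fun Q => ¬Q.card = 1), 1 := by
          rw [Finset.card_eq_sum_ones]
      _ ≤ ∑ Q ∈ (FF L i).filter (fun Q => ¬Q.card = 1), (Q.card - 1) := by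
          apply Finset.sum_le_sum
          intro Q hQ
          rw [Finset.mem_filter] at hQ
          have h1 := Finset.card_pos.mpr (FF_nonempty hQ.1)
          omega
      _ ≤ ∑ Q ∈ FF L i, (Q.card - 1) :=
          Finset.sum_le_sum_of_subset (Finset.filter_subset _ _)
      _ = bb L i := rfl

theorem FF_N_card {L : Finset (List α)} {N : ℕ} (hlen : ∀ w ∈ L, w.length = N) :
    (FF L N).card ≤ 1 := by
  apply Finset.card_le_one.mpr
  have key : ∀ Q ∈ FF L N, Q = ({[]} : Finset (List α)) := by
    intro Q hQ
    obtain ⟨p, hp, rfl⟩ := Finset.mem_image.mp hQ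
    obtain ⟨w, hw, rfl⟩ := Finset.mem_image.mp hp
    have hwlen := hlen w hw
    have htk : w.take N = w := by
      rw [← hwlen]
      exact List.take_length
    ext s
    rw [mem_qs, Finset.mem_singleton, htk]
    constructor
    · intro h
      have := hlen _ h
      rw [List.length_append, hwlen] at this
      have : s.length = 0 := by omega
      exact List.length_eq_zero_iff.mp this
    · rintro rfl
      rwa [List.append_nil]
  intro a ha b hb
  rw [key a ha, key b hb]

theorem sc_le_sum {L : Finset (List α)} {N : ℕ} (hlen : ∀ w ∈ L, w.length = N) :
    sc (↑L : Set (List α)) ≤ 1 + ∑ i ∈ Finset.range (N + 1), (FF L i).card := by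
  classical
  set G : Finset (Finset (List α)) := insert ∅ ((Finset.range (N+1)).biUnion (FF L)) with hG
  have hsub : { Q : Set (List α) | ∃ p : List α, Q = { s | p ++ s ∈ (↑L : Set (List α)) } }
      ⊆ (fun t : Finset (List α) => (↑t : Set (List α))) '' ↑G := by
    rintro Q ⟨p, rfl⟩
    refine ⟨qs L p, ?_, ?_⟩
    · by_cases hq : qs L p = ∅
      · rw [hq]
        exact Finset.mem_coe.mpr (Finset.mem_insert_self _ _)
      · obtain ⟨s, hs⟩ := Finset.nonempty_iff_ne_empty.mpr hq
        have hps : p ++ s ∈ L := mem_qs.mp hs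
        have hplen : p.length ≤ N := by
          have := hlen _ hps
          rw [List.length_append] at this
          omega
        have hpmem : p ∈ pre L p.length :=
          Finset.mem_image.mpr ⟨p ++ s, hps, List.take_left⟩
        apply Finset.mem_coe.mpr
        apply Finset.mem_insert_of_mem
        exact Finset.mem_biUnion.mpr ⟨p.length, Finset.mem_range.mpr (by omega),
          Finset.mem_image_of_mem _ hpmem⟩
    · ext s
      simp only [Finset.mem_coe, Set.mem_setOf_eq, mem_qs]
  have h1 : sc (↑L : Set (List α)) ≤
      Set.ncard ((fun t : Finset (List α) => (↑t : Set (List α))) '' ↑G) := by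
    rw [sc]
    exact Set.ncard_le_ncard hsub ((G.finite_toSet).image _)
  have h2 : Set.ncard ((fun t : Finset (List α) => (↑t : Set (List α))) '' ↑G) ≤ G.card := by
    calc Set.ncard ((fun t : Finset (List α) => (↑t : Set (List α))) '' ↑G)
        ≤ Set.ncard (↑G : Set (Finset (List α))) := Set.ncard_image_le G.finite_toSet
      _ = G.card := Set.ncard_coe_finset G
  have h3 : G.card ≤ 1 + ∑ i ∈ Finset.range (N+1), (FF L i).card := by
    calc G.card ≤ ((Finset.range (N+1)).biUnion (FF L)).card + 1 := Finset.card_insert_le _ _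
      _ ≤ (∑ i ∈ Finset.range (N+1), (FF L i).card) + 1 :=
          Nat.add_le_add_right (Finset.card_biUnion_le) 1
      _ = 1 + ∑ i ∈ Finset.range (N+1), (FF L i).card := by omega
  omega

end SCAux

theorem stmt_7 {α : Type*} [Fintype α] [DecidableEq α]
    (k N : ℕ) (hk : 2 ≤ k) (hcard : Fintype.card α = k) (hN : 1 ≤ N)
    (L : Finset (List α)) (hne : L.Nonempty) (hlen : ∀ w ∈ L, w.length = N)
    (m r v : ℕ) (hm : m = L.card) (hr : r = Nat.log k m)
    (hv : v = ∑ i ∈ Finset.range (r + 1), k ^ i)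
    (hNr : 3 * r + 1 ≤ N) :
    sc (↑L : Set (List α)) ≤ 2 * v + m * (N - 2 * r - 1) + 1 := by
  classical
  subst hcard
  have hNe : Nonempty α := Fintype.card_pos_iff.mp (by omega)
  obtain ⟨d⟩ := hNe
  subst hm hv
  set M := N - 2 * r - 1 with hMdef
  have hsplit : N + 1 = (r + 1) + (M + (r + 1)) := by omega
  set B := SCAux.bb L (N - r) with hB
  have hNrN : N - r ≤ N := by omega
  have hBm : B + (SCAux.pre L (N - r)).card ≤ L.card := SCAux.bb_add_pre hlen hNrN
  have hpre1 : 1 ≤ (SCAux.pre L (N - r)).card := Finset.card_pos.mpr (hne.image _)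
  have hmain := SCAux.sc_le_sum hlen
  have hdecomp : ∑ i ∈ Finset.range (N + 1), (SCAux.FF L i).card
      = (∑ i ∈ Finset.range (r + 1), (SCAux.FF L i).card)
        + ((∑ i ∈ Finset.range M, (SCAux.FF L (r + 1 + i)).card)
          + (∑ i ∈ Finset.range (r + 1), (SCAux.FF L (r + 1 + (M + i))).card)) := by
    rw [hsplit, Finset.sum_range_add (fun i => (SCAux.FF L i).card) (r + 1) (M + (r + 1)),
      Finset.sum_range_add (fun i => (SCAux.FF L (r + 1 + i)).card) M (r + 1)]
  have hthird : ∑ i ∈ Finset.range (r + 1), (SCAux.FF L (r + 1 + (M + i))).card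
      = (∑ i ∈ Finset.range r, (SCAux.FF L (N - r + i)).card) + (SCAux.FF L N).card := by
    rw [Finset.sum_range_succ]
    congr 1
    · apply Finset.sum_congr rfl
      intro i hi
      rw [Finset.mem_range] at hi
      have hx : r + 1 + (M + i) = N - r + i := by omega
      rw [hx]
    · have hx : r + 1 + (M + r) = N := by omega
      rw [hx]
  have hb1 : ∑ i ∈ Finset.range (r + 1), (SCAux.FF L i).card
      ≤ ∑ i ∈ Finset.range (r + 1), Fintype.card α ^ i := by
    apply Finset.sum_le_sum
    intro i hi
    rw [Finset.mem_range] at hi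
    have hir : i ≤ N := by omega
    exact le_trans SCAux.FF_card_le_pre (SCAux.pre_card_le_pow d hlen hir)
  have hb2 : ∑ i ∈ Finset.range M, (SCAux.FF L (r + 1 + i)).card ≤ M * (L.card - B) := by
    calc ∑ i ∈ Finset.range M, (SCAux.FF L (r + 1 + i)).card
        ≤ ∑ _i ∈ Finset.range M, (L.card - B) := by
          apply Finset.sum_le_sum
          intro i hi
          rw [Finset.mem_range] at hi
          have h1 : r + 1 + i ≤ N - r := by omega
          calc (SCAux.FF L (r + 1 + i)).card
              ≤ (SCAux.pre L (r + 1 + i)).card := SCAux.FF_card_le_pre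
            _ ≤ (SCAux.pre L (N - r)).card := SCAux.pre_mono h1
            _ ≤ L.card - B := by omega
      _ = M * (L.card - B) := by rw [Finset.sum_const, Finset.card_range, smul_eq_mul]
  have hb3 : ∑ i ∈ Finset.range r, (SCAux.FF L (N - r + i)).card
      ≤ (∑ j ∈ Finset.range r, Fintype.card α ^ (j + 1)) + r * B := by
    calc ∑ i ∈ Finset.range r, (SCAux.FF L (N - r + i)).card
        ≤ ∑ i ∈ Finset.range r, (Fintype.card α ^ (r - i) + B) := by
          apply Finset.sum_le_sum
          intro i hi
          rw [Finset.mem_range] at hi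
          have hiN : N - r + i ≤ N := by omega
          have h1 := SCAux.width_suffix d hlen hiN
          have h2 : SCAux.bb L (N - r + i) ≤ B := SCAux.bb_mono hlen (by omega) hiN
          have h3 : N - (N - r + i) = r - i := by omega
          rw [h3] at h1
          exact le_trans h1 (Nat.add_le_add_left h2 _)
      _ = (∑ i ∈ Finset.range r, Fintype.card α ^ (r - i)) + r * B := by
          rw [Finset.sum_add_distrib, Finset.sum_const, Finset.card_range, smul_eq_mul]
      _ = (∑ j ∈ Finset.range r, Fintype.card α ^ (j + 1)) + r * B := by
          congr 1
          rw [← Finset.sum_range_reflect (fun j => Fintype.card α ^ (j + 1)) r]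
          apply Finset.sum_congr rfl
          intro i hi
          rw [Finset.mem_range] at hi
          congr 1
          omega
  have hb4 : (SCAux.FF L N).card ≤ 1 := SCAux.FF_N_card hlen
  have hvW : ∑ i ∈ Finset.range (r + 1), Fintype.card α ^ i
      = (∑ j ∈ Finset.range r, Fintype.card α ^ (j + 1)) + 1 := by
    rw [Finset.sum_range_succ']
    simp
  have hrM : r ≤ M := by omega
  have hBLe : B ≤ L.card := by omega
  have hXY : M * (L.card - B) + M * B = M * L.card := by
    rw [← mul_add, Nat.sub_add_cancel hBLe]
  have hrB : r * B ≤ M * B := Nat.mul_le_mul_right B hrM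
  have htotal : ∑ i ∈ Finset.range (N + 1), (SCAux.FF L i).card
      ≤ ((∑ j ∈ Finset.range r, Fintype.card α ^ (j + 1)) + 1)
        + (M * (L.card - B)
          + (((∑ j ∈ Finset.range r, Fintype.card α ^ (j + 1)) + r * B) + 1)) := by
    rw [hdecomp, hthird]
    have hb1' := le_trans hb1 (le_of_eq hvW)
    exact add_le_add hb1' (add_le_add hb2 (add_le_add hb3 hb4))
  rw [hvW, mul_comm L.card M]
  have hfinal := le_trans hmain (Nat.add_le_add_left htotal 1)
  linarith [hfinal, hXY, hrB]
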